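/- arXiv:2012.07691 — 2 statements merged into one kernel-verified Lean document; each statement's English description precedes it below -/
import Mathlib

section
/- Every causal LTI operator with absolutely summable impulse response has fading memory: if g ∈ ℓ¹(ℕ) and (Fu)_k = Σ_{m=0}^{k} g_{k−m} u_m, then F has fading memory on 𝒰_β for every β > 0, for some decreasing weight sequence w : ℕ → (0,1] tending to 0. -/
def InU (β : ℝ) (u : ℕ → ℝ) : Prop := ∃ b, b < β ∧ ∀ k, |u k| ≤ b

def FadingMemory (β : ℝ) (w : ℕ → ℝ) (F : (ℕ → ℝ) → (ℕ → ℝ)) : Prop :=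
  ∀ ε > 0, ∃ δ > 0, ∀ u u2 : ℕ → ℝ, InU β u → InU β u2 → ∀ k : ℕ,
    (∀ m ≤ k, |u m - u2 m| * w (k - m) < δ) → |F u k - F u2 k| < ε

/-- The causal convolution operator with impulse response `g`. -/
noncomputable def convOp (g : ℕ → ℝ) (u : ℕ → ℝ) (k : ℕ) : ℝ :=
  ∑ m ∈ Finset.range (k + 1), g (k - m) * u m

/-- Every causal LTI operator with absolutely summable impulse response has
fading memory on `𝒰_β` for every `β > 0`. -/
theorem conv_has_fading_memory
    (g : ℕ → ℝ) (hg : Summable fun k => |g k|) :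
    ∀ β > 0, ∃ w : ℕ → ℝ,
      (∀ k, 0 < w k) ∧ (∀ k, w k ≤ 1) ∧ Antitone w ∧
      Filter.Tendsto w Filter.atTop (nhds 0) ∧
      FadingMemory β w (convOp g) := by
  intro β hβ
  refine ⟨fun k => (1/2 : ℝ)^k, fun k => by positivity,
    fun k => pow_le_one₀ (by norm_num) (by norm_num), ?_, ?_, ?_⟩
  · intro a b hab
    exact pow_le_pow_of_le_one (by norm_num) (by norm_num) hab
  · exact tendsto_pow_atTop_nhds_zero_of_lt_one (by norm_num) (by norm_num)
  · intro ε hε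
    set S : ℝ := ∑' k, |g k| with hSdef
    have hS0 : 0 ≤ S := tsum_nonneg fun _ => abs_nonneg _
    -- choose N with small tail
    have htail : ∀ᶠ N in Filter.atTop, ∑' i, |g (i + N)| < ε / (4*β) :=
      (tendsto_sum_nat_add fun k => |g k|).eventually
        (gt_mem_nhds (by positivity))
    obtain ⟨N, hN⟩ := htail.exists
    set T : ℝ := ∑' i, |g (i + N)| with hTdef
    have hT0 : 0 ≤ T := tsum_nonneg fun _ => abs_nonneg _
    set wN : ℝ := (1/2 : ℝ)^N with hwN
    have hwN0 : 0 < wN := by positivity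
    set D : ℝ := ε/2 * wN / (S + 1) with hD
    have hD0 : 0 < D := by positivity
    refine ⟨D, hD0, ?_⟩
    intro u u2 hu hu2 k hclose
    obtain ⟨b, hbβ, hb⟩ := hu
    obtain ⟨c, hcβ, hc⟩ := hu2
    have hdiff : convOp g u k - convOp g u2 k
        = ∑ m ∈ Finset.range (k+1), g (k-m) * (u m - u2 m) := by
      simp [convOp, mul_sub, Finset.sum_sub_distrib]
    have h1 : |convOp g u k - convOp g u2 k|
        ≤ ∑ m ∈ Finset.range (k+1), |g (k-m)| * |u m - u2 m| := by
      rw [hdiff]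
      refine (Finset.abs_sum_le_sum_abs _ _).trans (le_of_eq ?_)
      simp [abs_mul]
    have h2 : ∀ m ∈ Finset.range (k+1),
        |g (k-m)| * |u m - u2 m|
          ≤ |g (k-m)| * (D / wN) + (if N ≤ k - m then 2*β*|g (k-m)| else 0) := by
      intro m hm
      by_cases hcase : N ≤ k - m
      · rw [if_pos hcase]
        have habs : |u m - u2 m| ≤ 2*β := by
          calc |u m - u2 m| ≤ |u m| + |u2 m| := abs_sub _ _
            _ ≤ b + c := add_le_add (hb m) (hc m)
            _ ≤ 2*β := by linarith
        have h3 : |g (k-m)| * |u m - u2 m| ≤ |g (k-m)| * (2*β) :=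
          mul_le_mul_of_nonneg_left habs (abs_nonneg _)
        have h4 : 0 ≤ |g (k-m)| * (D / wN) := by positivity
        nlinarith
      · rw [if_neg hcase]
        have hmk : m ≤ k := Nat.lt_succ_iff.mp (Finset.mem_range.mp hm)
        have hlt : |u m - u2 m| * (1/2 : ℝ)^(k-m) < D := hclose m hmk
        have hwle : wN ≤ (1/2 : ℝ)^(k-m) :=
          pow_le_pow_of_le_one (by norm_num) (by norm_num)
            (le_of_lt (not_le.mp hcase))
        have habs : |u m - u2 m| ≤ D / wN := by
          rw [le_div_iff₀ hwN0]
          calc |u m - u2 m| * wN ≤ |u m - u2 m| * (1/2 : ℝ)^(k-m) :=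
                mul_le_mul_of_nonneg_left hwle (abs_nonneg _)
            _ ≤ D := le_of_lt hlt
        have h3 : |g (k-m)| * |u m - u2 m| ≤ |g (k-m)| * (D / wN) :=
          mul_le_mul_of_nonneg_left habs (abs_nonneg _)
        linarith
    have h5 : ∑ m ∈ Finset.range (k+1), |g (k-m)| * |u m - u2 m|
        ≤ ∑ m ∈ Finset.range (k+1),
            (|g (k-m)| * (D / wN) + (if N ≤ k - m then 2*β*|g (k-m)| else 0)) :=
      Finset.sum_le_sum h2
    -- reflect the sums
    have hrefl1 : ∑ m ∈ Finset.range (k+1), |g (k-m)| * (D / wN)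
        = ∑ j ∈ Finset.range (k+1), |g j| * (D / wN) := by
      have := Finset.sum_range_reflect (fun j => |g j| * (D / wN)) (k+1)
      simpa using this
    have hrefl2 : ∑ m ∈ Finset.range (k+1), (if N ≤ k - m then 2*β*|g (k-m)| else 0)
        = ∑ j ∈ Finset.range (k+1), (if N ≤ j then 2*β*|g j| else 0) := by
      have := Finset.sum_range_reflect (fun j => if N ≤ j then 2*β*|g j| else 0) (k+1)
      simpa using this
    have hbound1 : ∑ j ∈ Finset.range (k+1), |g j| * (D / wN) ≤ S * (D / wN) := by
      rw [← Finset.sum_mul]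
      exact mul_le_mul_of_nonneg_right
        (Summable.sum_le_tsum _ (fun i _ => abs_nonneg _) hg) (by positivity)
    -- tail bound
    have hfsum : Summable (fun j => if N ≤ j then |g j| else 0) := by
      refine Summable.of_nonneg_of_le (fun n => ?_) (fun n => ?_) hg
      · split <;> simp [abs_nonneg]
      · split <;> simp [abs_nonneg]
    have hftsum : (∑' j, if N ≤ j then |g j| else 0) = T := by
      have h := Summable.sum_add_tsum_nat_add N hfsum
      have hz : ∑ i ∈ Finset.range N, (if N ≤ i then |g i| else 0) = 0 := by
        refine Finset.sum_eq_zero fun i hi => ?_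
        rw [if_neg (Nat.not_le.mpr (Finset.mem_range.mp hi))]
      have ht : (∑' i, if N ≤ i + N then |g (i + N)| else 0) = T := by
        refine tsum_congr fun i => ?_
        rw [if_pos (Nat.le_add_left N i)]
      rw [hz, zero_add, ht] at h
      linarith [h]
    have hbound2 : ∑ j ∈ Finset.range (k+1), (if N ≤ j then 2*β*|g j| else 0)
        ≤ 2*β*T := by
      have heq : ∀ j, (if N ≤ j then 2*β*|g j| else 0)
          = 2*β * (if N ≤ j then |g j| else 0) := by
        intro j; split <;> simp
      simp_rw [heq]
      rw [← Finset.mul_sum]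
      refine mul_le_mul_of_nonneg_left ?_ (by positivity)
      calc ∑ j ∈ Finset.range (k+1), (if N ≤ j then |g j| else 0)
          ≤ ∑' j, (if N ≤ j then |g j| else 0) :=
            Summable.sum_le_tsum _ (fun i _ => by split <;> simp [abs_nonneg]) hfsum
        _ = T := hftsum
    -- combine
    have hDS : S * (D / wN) < ε/2 := by
      have hDw : D / wN = ε/2 / (S + 1) := by
        rw [hD]; field_simp
      rw [hDw]
      rw [mul_div_assoc', div_lt_iff₀ (by linarith)]
      nlinarith
    have hTb : 2*β*T < ε/2 := by
      have : T < ε/(4*β) := hN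
      have h4β : 0 < 4*β := by linarith
      calc 2*β*T < 2*β*(ε/(4*β)) := by
            exact mul_lt_mul_of_pos_left this (by linarith)
        _ = ε/2 := by field_simp; ring
    calc |convOp g u k - convOp g u2 k|
        ≤ ∑ m ∈ Finset.range (k+1), |g (k-m)| * |u m - u2 m| := h1
      _ ≤ ∑ m ∈ Finset.range (k+1),
            (|g (k-m)| * (D / wN) + (if N ≤ k - m then 2*β*|g (k-m)| else 0)) := h5
      _ = (∑ j ∈ Finset.range (k+1), |g j| * (D / wN))
            + ∑ j ∈ Finset.range (k+1), (if N ≤ j then 2*β*|g j| else 0) := by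
          rw [Finset.sum_add_distrib, hrefl1, hrefl2]
      _ ≤ S * (D / wN) + 2*β*T := add_le_add hbound1 hbound2
      _ < ε/2 + ε/2 := add_lt_add hDS hTb
      _ = ε := by ring
end

section
/- Uniform approximation transfers across feedback over finite horizons: suppose v, v̂ : ℕ → ℝ satisfy v_{k+1} = v_k + (t_s/c)(−y_k + i_k) and v̂_{k+1} = v̂_k + (t_s/c)(−ŷ_k + i_k) with v₀ = v̂₀, where |ŷ_k − y_k| ≤ ε + L·max_{m ≤ k} |v̂_m − v_m| for constants ε ≥ 0, L ≥ 0. Then for all k ≤ N, |v̂_k − v_k| ≤ (t_s/c)·ε·((1 + (t_s/c)L)^k − 1)/((t_s/c)L) when L > 0 (and ≤ k (t_s/c) ε when L = 0). -/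
private def Bnd (a b : ℝ) : ℕ → ℝ
  | 0 => 0
  | k + 1 => a * Bnd a b k + b

private lemma Bnd_nonneg {a b : ℝ} (ha : 1 ≤ a) (hb : 0 ≤ b) : ∀ k, 0 ≤ Bnd a b k
  | 0 => le_refl 0
  | k + 1 => by
      have := Bnd_nonneg ha hb k
      simp only [Bnd]; nlinarith

private lemma Bnd_mono {a b : ℝ} (ha : 1 ≤ a) (hb : 0 ≤ b) : Monotone (Bnd a b) := by
  apply monotone_nat_of_le_succ
  intro k
  have h := Bnd_nonneg ha hb k
  simp only [Bnd]; nlinarith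

private lemma Bnd_closed_pos {a b : ℝ} (ha : a - 1 ≠ 0) :
    ∀ k, Bnd a b k = b * (a ^ k - 1) / (a - 1)
  | 0 => by simp [Bnd]
  | k + 1 => by
      rw [Bnd, Bnd_closed_pos ha k]
      field_simp
      ring

private lemma Bnd_closed_zero (b : ℝ) : ∀ k, Bnd 1 b k = (k : ℝ) * b
  | 0 => by simp [Bnd]
  | k + 1 => by
      rw [Bnd, Bnd_closed_zero b k]
      push_cast; ring

/-- Discrete Grönwall-type bound: uniform approximation of the feedback
operator transfers to a closed-loop simulation-error bound over finite
horizons. -/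
theorem closed_loop_simulation_error_bound
    (c ts ε L : ℝ) (hc : 0 < c) (hts : 0 < ts) (hε : 0 ≤ ε) (hL : 0 ≤ L)
    (N : ℕ) (i y yhat v vhat : ℕ → ℝ)
    (h0 : v 0 = vhat 0)
    (hv : ∀ k, v (k + 1) = v k + (ts / c) * (-(y k) + i k))
    (hvhat : ∀ k, vhat (k + 1) = vhat k + (ts / c) * (-(yhat k) + i k))
    (herr : ∀ k, |yhat k - y k| ≤ ε + L *
      (Finset.range (k + 1)).sup' (Finset.nonempty_range_iff.mpr (Nat.succ_ne_zero k))
        (fun m => |vhat m - v m|)) :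
    ∀ k ≤ N,
      (0 < L → |vhat k - v k| ≤
        (ts / c) * ε * ((1 + (ts / c) * L) ^ k - 1) / ((ts / c) * L)) ∧
      (L = 0 → |vhat k - v k| ≤ (k : ℝ) * (ts / c) * ε) := by
  set h := ts / c with hh
  have hh0 : 0 < h := div_pos hts hc
  have ha1 : (1:ℝ) ≤ 1 + h * L := by nlinarith
  have hb0 : (0:ℝ) ≤ h * ε := by positivity
  have key : ∀ k, |vhat k - v k| ≤ Bnd (1 + h * L) (h * ε) k := by
    intro k
    induction k using Nat.strong_induction_on with
    | _ k ih =>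
      match k with
      | 0 => simp [Bnd, h0]
      | j + 1 =>
        have hsup : (Finset.range (j + 1)).sup'
            (Finset.nonempty_range_iff.mpr (Nat.succ_ne_zero j))
            (fun m => |vhat m - v m|) ≤ Bnd (1 + h * L) (h * ε) j := by
          apply Finset.sup'_le
          intro m hm
          have hm' : m < j + 1 := Finset.mem_range.mp hm
          exact le_trans (ih m hm') (Bnd_mono ha1 hb0 (Nat.lt_succ_iff.mp hm'))
        have herr' := herr j
        have e1 : vhat (j+1) - v (j+1) = (vhat j - v j) - h * (yhat j - y j) := by
          rw [hv j, hvhat j]; ring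
        have e2 : |vhat (j+1) - v (j+1)| ≤ |vhat j - v j| + h * |yhat j - y j| := by
          rw [e1]
          calc |(vhat j - v j) - h * (yhat j - y j)|
              ≤ |vhat j - v j| + |h * (yhat j - y j)| := abs_sub _ _
            _ = |vhat j - v j| + h * |yhat j - y j| := by
                rw [abs_mul, abs_of_pos hh0]
        have ihj := ih j (Nat.lt_succ_self j)
        have : |yhat j - y j| ≤ ε + L * Bnd (1 + h * L) (h * ε) j := by
          refine le_trans herr' ?_
          have := mul_le_mul_of_nonneg_left hsup hL
          linarith
        calc |vhat (j+1) - v (j+1)|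
            ≤ |vhat j - v j| + h * |yhat j - y j| := e2
          _ ≤ Bnd (1 + h * L) (h * ε) j + h * (ε + L * Bnd (1 + h * L) (h * ε) j) := by
              have := mul_le_mul_of_nonneg_left this (le_of_lt hh0)
              linarith
          _ = Bnd (1 + h * L) (h * ε) (j + 1) := by simp only [Bnd]; ring
  intro k _
  constructor
  · intro hLpos
    have hne : (1 + h * L) - 1 ≠ 0 := by
      have : 0 < h * L := mul_pos hh0 hLpos
      intro hcon; nlinarith
    have := key k
    rw [Bnd_closed_pos hne k] at this
    calc |vhat k - v k| ≤ h * ε * ((1 + h * L) ^ k - 1) / ((1 + h * L) - 1) := this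
      _ = h * ε * ((1 + h * L) ^ k - 1) / (h * L) := by ring_nf
  · intro hL0
    have := key k
    rw [hL0] at this
    simp only [mul_zero, add_zero] at this
    rw [Bnd_closed_zero (h * ε) k] at this
    linarith [this]
end
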